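/- Let k be a field, d = d_0 + d_1 + ⋯ + d_l a partition of d into nonnegative integers, V = k^d with the decomposition V = V_0 ⊕ ⋯ ⊕ V_l (dim V_i = d_i) and decreasing filtration Fil^i V = ⊕_{j ≥ i} V_j for 0 ≤ i ≤ l. Let 0 ≤ s ≤ l and let M be a d×d matrix over k, written in blocks a_{i,j} ∈ M_{d_i × d_j}(k) (0 ≤ i, j ≤ l), which is lower-triangular of type ≤ s (meaning a_{i,i+t} = 0 for all t > s) and special (meaning rank(M) = Σ_{i=0}^{l-s} rank(a_{i,i+s})). Let 𝕄 be the endomorphism of V with matrix M. Then for every integer i, 𝕄(Fil^{i+s} V) = im(𝕄) ∩ Fil^{i} V. -/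

import Mathlib

noncomputable def blockEnd (k : Type*) [Field k] (l : ℕ) (d : Fin (l + 1) → ℕ)
    (a : ∀ i j : Fin (l + 1), Matrix (Fin (d i)) (Fin (d j)) k) :
    (∀ i : Fin (l + 1), Fin (d i) → k) →ₗ[k] (∀ i : Fin (l + 1), Fin (d i) → k) :=
  LinearMap.pi fun i => ∑ j : Fin (l + 1), (Matrix.mulVecLin (a i j)) ∘ₗ LinearMap.proj j

def blockFil (k : Type*) [Field k] (l : ℕ) (d : Fin (l + 1) → ℕ) (m : ℤ) :
    Submodule k (∀ i : Fin (l + 1), Fin (d i) → k) where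
  carrier := {v | ∀ i : Fin (l + 1), (i : ℤ) < m → v i = 0}
  add_mem' := by
    intro x y hx hy i him
    simp [Pi.add_apply, hx i him, hy i him]
  zero_mem' := by intro i _; rfl
  smul_mem' := by
    intro c x hx i him
    simp [Pi.smul_apply, hx i him]

namespace Stmt8Aux

/-- A generic rank–nullity step. -/
lemma finrank_proj_step {K V V₂ : Type*} [Field K] [AddCommGroup V] [Module K V]
    [FiniteDimensional K V] [AddCommGroup V₂] [Module K V₂]
    (A B : Submodule K V) (hBA : B ≤ A) (g : V →ₗ[K] V₂)
    (hker : ∀ x ∈ A, (g x = 0 ↔ x ∈ B)) :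
    Module.finrank K A = Module.finrank K (A.map g) + Module.finrank K B := by
  set f : A →ₗ[K] V₂ := g.comp A.subtype with hf
  have hr : LinearMap.range f = A.map g := by
    rw [hf, LinearMap.range_comp, Submodule.range_subtype]
  have hk : LinearMap.ker f = Submodule.comap A.subtype B := by
    ext x
    simpa [hf] using hker x x.2
  have hrn := LinearMap.finrank_range_add_finrank_ker f
  rw [hr, hk] at hrn
  have he : Module.finrank K (Submodule.comap A.subtype B) = Module.finrank K B :=
    (Submodule.comapSubtypeEquivOfLe hBA).finrank_eq
  omega

/-- A generic telescoping lemma. -/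
lemma telescope (r G : ℕ → ℕ) (l : ℕ) (hstep : ∀ n ≤ l, r n = G n + r (n + 1))
    (htop : r (l + 1) = 0) : r 0 = ∑ j ∈ Finset.range (l + 1), G j := by
  have key : ∀ mm : ℕ, r (l + 1 - mm) = ∑ j ∈ Finset.Ico (l + 1 - mm) (l + 1), G j := by
    intro mm
    induction mm with
    | zero => simpa using htop
    | succ n ih =>
      rcases le_or_gt (n + 1) (l + 1) with h | h
      · have h1 : l + 1 - (n + 1) = l - n := by omega
        have h2 : l + 1 - n = (l - n) + 1 := by omega
        rw [h1, hstep (l - n) (by omega),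
          Finset.sum_eq_sum_Ico_succ_bot (by omega : l - n < l + 1) G]
        rw [h2] at ih
        rw [ih]
      · have h1 : l + 1 - (n + 1) = l + 1 - n := by omega
        rw [h1]; exact ih
  have h0 := key (l + 1)
  rw [Nat.sub_self, Finset.range_eq_Ico] at *
  exact h0

variable {k : Type*} [Field k] {l s : ℕ} {d : Fin (l + 1) → ℕ}

lemma blockEnd_apply (a : ∀ i j : Fin (l + 1), Matrix (Fin (d i)) (Fin (d j)) k)
    (v : ∀ i : Fin (l + 1), Fin (d i) → k) (i : Fin (l + 1)) :
    blockEnd k l d a v i = ∑ j : Fin (l + 1), (a i j).mulVec (v j) := by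
  simp [blockEnd]

lemma mem_blockFil {m : ℤ} {v : ∀ i : Fin (l + 1), Fin (d i) → k} :
    v ∈ blockFil k l d m ↔ ∀ i : Fin (l + 1), (i : ℤ) < m → v i = 0 := Iff.rfl

lemma blockFil_antitone {m m' : ℤ} (h : m ≤ m') :
    blockFil k l d m' ≤ blockFil k l d m := fun v hv i him => hv i (lt_of_lt_of_le him h)

lemma blockFil_eq_top {m : ℤ} (h : m ≤ 0) : blockFil (l := l) k d m = ⊤ := by
  ext v
  simp only [Submodule.mem_top, iff_true, mem_blockFil]
  intro i him
  exact absurd him (by have := Int.natCast_nonneg (i : ℕ); omega)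

lemma blockFil_eq_bot {m : ℤ} (h : (l : ℤ) < m) : blockFil (l := l) k d m = ⊥ := by
  ext v
  simp only [Submodule.mem_bot, mem_blockFil]
  constructor
  · intro hv
    funext i
    have hi : (i : ℕ) ≤ l := Nat.lt_succ_iff.mp i.isLt
    exact hv i (by omega)
  · rintro rfl i _; rfl

lemma blockFil_succ {m : ℤ} {x : ∀ i : Fin (l + 1), Fin (d i) → k} (p : Fin (l + 1))
    (hp : (p : ℤ) = m) (hx : x ∈ blockFil k l d m) (hxp : x p = 0) :
    x ∈ blockFil k l d (m + 1) := by
  intro q hq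
  rcases lt_or_eq_of_le (Int.lt_add_one_iff.mp hq) with h | h
  · exact hx q h
  · have hqp : q = p := by
      apply Fin.ext
      have : ((q : ℕ) : ℤ) = ((p : ℕ) : ℤ) := by rw [hp]; exact h
      exact_mod_cast this
    rw [hqp]; exact hxp

lemma blockEnd_mem_fil (a : ∀ i j : Fin (l + 1), Matrix (Fin (d i)) (Fin (d j)) k)
    (htri : ∀ i j : Fin (l + 1), (i : ℕ) + s < (j : ℕ) → a i j = 0)
    {m : ℤ} {v : ∀ i : Fin (l + 1), Fin (d i) → k}
    (hv : v ∈ blockFil k l d (m + s)) :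
    blockEnd k l d a v ∈ blockFil k l d m := by
  intro p hp
  rw [blockEnd_apply]
  apply Finset.sum_eq_zero
  intro j _
  rcases lt_or_ge ((j : ℤ)) (m + s) with hj | hj
  · rw [hv j hj, Matrix.mulVec_zero]
  · rw [htri p j (by exact_mod_cast (show ((p : ℕ) : ℤ) + s < ((j : ℕ) : ℤ) by omega)),
      Matrix.zero_mulVec]

variable (k l s d) in
/-- `W m = im 𝕄 ⊓ Fil^m`. -/
noncomputable def Wf (a : ∀ i j : Fin (l + 1), Matrix (Fin (d i)) (Fin (d j)) k) (m : ℤ) :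
    Submodule k (∀ i : Fin (l + 1), Fin (d i) → k) :=
  LinearMap.range (blockEnd k l d a) ⊓ blockFil k l d m

variable (k l s d) in
/-- `U m = 𝕄(Fil^{m+s})`. -/
noncomputable def Uf (a : ∀ i j : Fin (l + 1), Matrix (Fin (d i)) (Fin (d j)) k) (m : ℤ) :
    Submodule k (∀ i : Fin (l + 1), Fin (d i) → k) :=
  Submodule.map (blockEnd k l d a) (blockFil k l d (m + s))

variable (a : ∀ i j : Fin (l + 1), Matrix (Fin (d i)) (Fin (d j)) k)

lemma U_le_W (htri : ∀ i j : Fin (l + 1), (i : ℕ) + s < (j : ℕ) → a i j = 0) (m : ℤ) :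
    Uf k l s d a m ≤ Wf k l d a m := by
  rintro x ⟨v, hv, rfl⟩
  exact ⟨LinearMap.mem_range_self _ v, blockEnd_mem_fil a htri hv⟩

lemma U_anti {m m' : ℤ} (h : m ≤ m') : Uf k l s d a m' ≤ Uf k l s d a m :=
  Submodule.map_mono (blockFil_antitone (by omega))

lemma W_anti {m m' : ℤ} (h : m ≤ m') : Wf k l d a m' ≤ Wf k l d a m :=
  inf_le_inf_left _ (blockFil_antitone h)

lemma W_succ_iff (p : Fin (l + 1)) {m : ℤ} (hp : (p : ℤ) = m)
    (x : ∀ i : Fin (l + 1), Fin (d i) → k) (hx : x ∈ Wf k l d a m) :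
    x p = 0 ↔ x ∈ Wf k l d a (m + 1) := by
  constructor
  · intro h0
    exact ⟨hx.1, blockFil_succ p hp hx.2 h0⟩
  · intro hmem
    exact hmem.2 p (by omega)

variable (k l s d) in
/-- dimension of the image of `W m` in the `m`-th graded piece. -/
noncomputable def Gf (a : ∀ i j : Fin (l + 1), Matrix (Fin (d i)) (Fin (d j)) k) (n : ℕ) : ℕ :=
  if h : n ≤ l then
    Module.finrank k (Submodule.map
      (LinearMap.proj (R := k) (φ := fun i : Fin (l + 1) => Fin (d i) → k) ⟨n, by omega⟩)
      (Wf k l d a (n : ℤ)))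
  else 0

lemma finrank_W_step (n : ℕ) (hn : n ≤ l) :
    Module.finrank k (Wf k l d a (n : ℤ))
      = Gf k l d a n + Module.finrank k (Wf k l d a ((n + 1 : ℕ) : ℤ)) := by
  have hcast : ((n + 1 : ℕ) : ℤ) = (n : ℤ) + 1 := by push_cast; ring
  rw [hcast]
  have h := finrank_proj_step (Wf k l d a (n : ℤ)) (Wf k l d a ((n : ℤ) + 1))
    (W_anti a (by omega))
    (LinearMap.proj (R := k) (φ := fun i : Fin (l + 1) => Fin (d i) → k) ⟨n, by omega⟩)
    (fun x hx => W_succ_iff a ⟨n, by omega⟩ rfl x hx)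
  rw [h]
  congr 1
  rw [Gf, dif_pos hn]

lemma finrank_range_eq_sum :
    Module.finrank k (LinearMap.range (blockEnd k l d a))
      = ∑ j ∈ Finset.range (l + 1), Gf k l d a j := by
  have htop : Module.finrank k (Wf k l d a ((l + 1 : ℕ) : ℤ)) = 0 := by
    have hb : Wf k l d a ((l + 1 : ℕ) : ℤ) = ⊥ := by
      rw [Wf, blockFil_eq_bot (by push_cast; omega), inf_bot_eq]
    rw [hb, finrank_bot]
  have h := telescope (fun n => Module.finrank k (Wf k l d a (n : ℤ))) (Gf k l d a) l
    (fun n hn => finrank_W_step a n hn) htop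
  have hW0 : Wf k l d a ((0 : ℕ) : ℤ) = LinearMap.range (blockEnd k l d a) := by
    rw [Wf, blockFil_eq_top (by norm_num), inf_top_eq]
  rw [← hW0]
  exact h

lemma rank_le_finrank_map_U (p : Fin (l + 1)) (h : (p : ℕ) + s ≤ l) :
    (a p ⟨(p : ℕ) + s, Nat.lt_succ_of_le h⟩).rank
      ≤ Module.finrank k (Submodule.map
          (LinearMap.proj (R := k) (φ := fun i : Fin (l + 1) => Fin (d i) → k) p)
          (Uf k l s d a (p : ℤ))) := by
  classical
  set q : Fin (l + 1) := ⟨(p : ℕ) + s, by omega⟩ with hq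
  have hsub : LinearMap.range (a p q).mulVecLin ≤ Submodule.map
      (LinearMap.proj (R := k) (φ := fun i : Fin (l + 1) => Fin (d i) → k) p)
      (Uf k l s d a (p : ℤ)) := by
    rintro y ⟨w, rfl⟩
    have hmem : Pi.single q w ∈ blockFil k l d ((p : ℤ) + s) := by
      intro j hj
      apply Pi.single_eq_of_ne
      intro hjq
      rw [hjq] at hj
      have hqv : ((q : ℕ) : ℤ) = (p : ℕ) + s := by rw [hq]; push_cast; ring
      omega
    refine ⟨blockEnd k l d a (Pi.single q w), Submodule.mem_map_of_mem hmem, ?_⟩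
    show blockEnd k l d a (Pi.single q w) p = _
    rw [blockEnd_apply, Finset.sum_eq_single q]
    · rw [Pi.single_eq_same]; rfl
    · intro j _ hj; rw [Pi.single_eq_of_ne hj, Matrix.mulVec_zero]
    · simp
  exact Submodule.finrank_mono hsub

lemma map_U_eq_map_W
    (htri : ∀ i j : Fin (l + 1), (i : ℕ) + s < (j : ℕ) → a i j = 0)
    (hspecial : Module.finrank k (LinearMap.range (blockEnd k l d a))
      = ∑ i : Fin (l + 1),
          if h : (i : ℕ) + s ≤ l then (a i ⟨(i : ℕ) + s, Nat.lt_succ_of_le h⟩).rank else 0)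
    (p : Fin (l + 1)) :
    Submodule.map (LinearMap.proj (R := k) (φ := fun i : Fin (l + 1) => Fin (d i) → k) p)
        (Uf k l s d a (p : ℤ))
      = Submodule.map (LinearMap.proj (R := k) (φ := fun i : Fin (l + 1) => Fin (d i) → k) p)
        (Wf k l d a (p : ℤ)) := by
  classical
  set T : Fin (l + 1) → ℕ := fun p =>
    if h : (p : ℕ) + s ≤ l then (a p ⟨(p : ℕ) + s, Nat.lt_succ_of_le h⟩).rank else 0 with hT
  have hspecial' : Module.finrank k (LinearMap.range (blockEnd k l d a))
      = ∑ p : Fin (l + 1), T p := hspecial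
  have hGdef : ∀ p : Fin (l + 1), Gf k l d a (p : ℕ)
      = Module.finrank k (Submodule.map
          (LinearMap.proj (R := k) (φ := fun i : Fin (l + 1) => Fin (d i) → k) p)
          (Wf k l d a ((p : ℕ) : ℤ))) := by
    intro p
    have hpl : (p : ℕ) ≤ l := Nat.lt_succ_iff.mp p.isLt
    rw [Gf, dif_pos hpl]
  have hTle : ∀ p : Fin (l + 1), T p ≤ Module.finrank k (Submodule.map
      (LinearMap.proj (R := k) (φ := fun i : Fin (l + 1) => Fin (d i) → k) p)
      (Uf k l s d a (p : ℤ))) := by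
    intro p
    simp only [hT]
    split_ifs with h
    · exact rank_le_finrank_map_U a p h
    · exact Nat.zero_le _
  have hTG : ∀ p : Fin (l + 1), T p ≤ Gf k l d a (p : ℕ) := by
    intro p
    refine le_trans (hTle p) ?_
    rw [hGdef p]
    exact Submodule.finrank_mono (Submodule.map_mono (U_le_W a htri _))
  have hsum2 : ∑ p : Fin (l + 1), T p = ∑ p : Fin (l + 1), Gf k l d a (p : ℕ) := by
    rw [← hspecial', finrank_range_eq_sum a]
    exact (Fin.sum_univ_eq_sum_range (fun j => Gf k l d a j) (l + 1)).symm
  have hTeq : ∀ p : Fin (l + 1), T p = Gf k l d a (p : ℕ) :=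
    fun p => (Finset.sum_eq_sum_iff_of_le (fun p _ => hTG p)).mp hsum2 p (Finset.mem_univ p)
  refine Submodule.eq_of_le_of_finrank_le (Submodule.map_mono (U_le_W a htri _)) ?_
  calc Module.finrank k (Submodule.map
        (LinearMap.proj (R := k) (φ := fun i : Fin (l + 1) => Fin (d i) → k) p)
        (Wf k l d a ((p : ℕ) : ℤ))) = Gf k l d a (p : ℕ) := (hGdef p).symm
    _ = T p := (hTeq p).symm
    _ ≤ _ := hTle p

lemma W_le_U_sup
    (htri : ∀ i j : Fin (l + 1), (i : ℕ) + s < (j : ℕ) → a i j = 0)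
    (hspecial : Module.finrank k (LinearMap.range (blockEnd k l d a))
      = ∑ i : Fin (l + 1),
          if h : (i : ℕ) + s ≤ l then (a i ⟨(i : ℕ) + s, Nat.lt_succ_of_le h⟩).rank else 0)
    (p : Fin (l + 1)) :
    Wf k l d a (p : ℤ) ≤ Uf k l s d a (p : ℤ) ⊔ Wf k l d a ((p : ℤ) + 1) := by
  intro x hx
  have hxp : x p ∈ Submodule.map
      (LinearMap.proj (R := k) (φ := fun i : Fin (l + 1) => Fin (d i) → k) p)
      (Wf k l d a ((p : ℕ) : ℤ)) := ⟨x, hx, rfl⟩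
  rw [← map_U_eq_map_W a htri hspecial p] at hxp
  obtain ⟨u, hu, hup⟩ := hxp
  refine Submodule.mem_sup.mpr ⟨u, hu, x - u, ?_, by abel⟩
  refine (W_succ_iff a p rfl (x - u)
    (Submodule.sub_mem _ hx (U_le_W a htri _ hu))).mp ?_
  have hup' : u p = x p := hup
  show x p - u p = 0
  rw [hup']
  abel

lemma W_le_U
    (htri : ∀ i j : Fin (l + 1), (i : ℕ) + s < (j : ℕ) → a i j = 0)
    (hspecial : Module.finrank k (LinearMap.range (blockEnd k l d a))
      = ∑ i : Fin (l + 1),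
          if h : (i : ℕ) + s ≤ l then (a i ⟨(i : ℕ) + s, Nat.lt_succ_of_le h⟩).rank else 0)
    (n : ℕ) :
    Wf k l d a ((l : ℤ) + 1 - n) ≤ Uf k l s d a ((l : ℤ) + 1 - n) := by
  induction n with
  | zero =>
    intro x hx
    have hb : blockFil k l d ((l : ℤ) + 1 - ((0 : ℕ) : ℤ)) = ⊥ :=
      blockFil_eq_bot (by push_cast; omega)
    have hx0 : x = 0 := by
      have h2 := hx.2
      rw [hb] at h2
      simpa using h2
    rw [hx0]; exact Submodule.zero_mem _
  | succ n ih =>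
    set m : ℤ := (l : ℤ) + 1 - ((n + 1 : ℕ) : ℤ) with hm
    have hm1 : m + 1 = (l : ℤ) + 1 - (n : ℕ) := by rw [hm]; push_cast; ring
    rcases lt_or_ge m 0 with hneg | hpos
    · have he : blockFil k l d m = blockFil k l d (m + 1) := by
        rw [blockFil_eq_top (by omega), blockFil_eq_top (by omega)]
      calc Wf k l d a m = Wf k l d a (m + 1) := by rw [Wf, Wf, he]
        _ ≤ Uf k l s d a (m + 1) := by rw [hm1]; exact ih
        _ ≤ Uf k l s d a m := U_anti a (by omega)
    · have hml : m ≤ (l : ℤ) := by omega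
      set p : Fin (l + 1) := ⟨m.toNat, by omega⟩ with hp
      have hpm : ((p : ℕ) : ℤ) = m := by
        show ((m.toNat : ℕ) : ℤ) = m
        omega
      calc Wf k l d a m = Wf k l d a (p : ℤ) := by rw [hpm]
        _ ≤ Uf k l s d a (p : ℤ) ⊔ Wf k l d a ((p : ℤ) + 1) := W_le_U_sup a htri hspecial p
        _ ≤ Uf k l s d a m ⊔ Uf k l s d a (m + 1) := by
            rw [hpm]
            exact sup_le_sup_left (by rw [hm1]; exact ih) _
        _ ≤ Uf k l s d a m := sup_le le_rfl (U_anti a (by omega))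

end Stmt8Aux

theorem stmt_8 (k : Type*) [Field k] (l s : ℕ) (hs : s ≤ l) (d : Fin (l + 1) → ℕ)
    (a : ∀ i j : Fin (l + 1), Matrix (Fin (d i)) (Fin (d j)) k)
    (htri : ∀ i j : Fin (l + 1), (i : ℕ) + s < (j : ℕ) → a i j = 0)
    (hspecial : Module.finrank k (LinearMap.range (blockEnd k l d a))
      = ∑ i : Fin (l + 1),
          if h : (i : ℕ) + s ≤ l then (a i ⟨(i : ℕ) + s, by omega⟩).rank else 0) :
    ∀ i : ℤ, Submodule.map (blockEnd k l d a) (blockFil k l d (i + s))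
      = LinearMap.range (blockEnd k l d a) ⊓ blockFil k l d i := by
  intro i
  refine le_antisymm (Stmt8Aux.U_le_W a htri i) ?_
  rcases le_or_gt i (l : ℤ) with hi | hi
  · have hn : (l : ℤ) + 1 - ((((l : ℤ) + 1 - i).toNat : ℕ) : ℤ) = i := by omega
    have hd := Stmt8Aux.W_le_U a htri hspecial ((l : ℤ) + 1 - i).toNat
    rw [hn] at hd
    exact hd
  · intro x hx
    have hb : blockFil k l d i = ⊥ := Stmt8Aux.blockFil_eq_bot hi
    have hx0 : x = 0 := by
      have h2 := hx.2
      rw [hb] at h2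
      simpa using h2
    rw [hx0]; exact Submodule.zero_mem _
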